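/- For every fixed integer k ≥ 1, there are (up to isomorphism) only finitely many k-vertex-critical (P_5, K_{1,4}+P_1)-free graphs. -/

import Mathlib

open SimpleGraph

set_option maxRecDepth 8000
set_option maxHeartbeats 1000000

/-- `G` contains no induced subgraph isomorphic to `H`. -/
def HFree {W V : Type*} (H : SimpleGraph W) (G : SimpleGraph V) : Prop :=
  IsEmpty (H ↪g G)

/-- `G` is `k`-vertex-critical: `χ(G) = k` and deleting any vertex decreases
the chromatic number below `k`. -/
def IsKVertexCritical {V : Type*} (G : SimpleGraph V) (k : ℕ) : Prop :=
  G.chromaticNumber = k ∧ ∀ v : V, (G.induce {v}ᶜ).chromaticNumber < k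

/-- The star `K_{1,s}`: center `0`, leaves `1, …, s`. -/
def starGraph (s : ℕ) : SimpleGraph (Fin (s + 1)) :=
  SimpleGraph.fromRel (fun i _ => (i : ℕ) = 0)

/-- `K_{1,s} + P_1`: the disjoint union of the star `K_{1,s}`
(center `0`, leaves `1, …, s`) and the isolated vertex `s + 1`. -/
def starPlusP1 (s : ℕ) : SimpleGraph (Fin (s + 2)) :=
  SimpleGraph.fromRel (fun i j => (i : ℕ) = 0 ∧ (j : ℕ) ≠ 0 ∧ (j : ℕ) ≤ s)

/-- The complement of `K_3 + 2P_1`: vertices `0,1,2` pairwise nonadjacent,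
vertices `3,4` adjacent to everything else. -/
def coK3Plus2P1 : SimpleGraph (Fin 5) :=
  SimpleGraph.fromRel (fun i j => 3 ≤ (i : ℕ) ∨ 3 ≤ (j : ℕ))

namespace Stmt15Aux

lemma spAdj (i j : Fin 6) :
    (starPlusP1 4).Adj i j ↔ i ≠ j ∧ ((i = 0 ∧ j ≠ 5) ∨ (j = 0 ∧ i ≠ 5)) := by
  rw [starPlusP1, fromRel_adj]
  revert i j
  decide

lemma pgAdj (i j : Fin 5) :
    (pathGraph 5).Adj i j ↔ (i : ℕ) + 1 = j ∨ (j : ℕ) + 1 = i := pathGraph_adj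

variable {V : Type} {G : SimpleGraph V}

lemma star_pattern (hfree : HFree (starPlusP1 4) G) {c p1 p2 p3 p4 w : V}
    (h12 : p1 ≠ p2) (h13 : p1 ≠ p3) (h14 : p1 ≠ p4) (h23 : p2 ≠ p3) (h24 : p2 ≠ p4)
    (h34 : p3 ≠ p4) (hwc : w ≠ c) (hw1 : w ≠ p1) (hw2 : w ≠ p2) (hw3 : w ≠ p3) (hw4 : w ≠ p4)
    (a1 : G.Adj c p1) (a2 : G.Adj c p2) (a3 : G.Adj c p3) (a4 : G.Adj c p4)
    (n12 : ¬ G.Adj p1 p2) (n13 : ¬ G.Adj p1 p3) (n14 : ¬ G.Adj p1 p4)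
    (n23 : ¬ G.Adj p2 p3) (n24 : ¬ G.Adj p2 p4) (n34 : ¬ G.Adj p3 p4)
    (nwc : ¬ G.Adj c w) (nw1 : ¬ G.Adj p1 w) (nw2 : ¬ G.Adj p2 w) (nw3 : ¬ G.Adj p3 w)
    (nw4 : ¬ G.Adj p4 w) : False := by
  have hc1 : c ≠ p1 := a1.ne
  have hc2 : c ≠ p2 := a2.ne
  have hc3 : c ≠ p3 := a3.ne
  have hc4 : c ≠ p4 := a4.ne
  set f : Fin 6 → V := ![c, p1, p2, p3, p4, w] with hf
  have e0 : f 0 = c := rfl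
  have e1 : f 1 = p1 := rfl
  have e2 : f 2 = p2 := rfl
  have e3 : f 3 = p3 := rfl
  have e4 : f 4 = p4 := rfl
  have e5 : f 5 = w := rfl
  refine hfree.elim ⟨⟨f, ?_⟩, ?_⟩
  · intro a b hab
    fin_cases a <;> fin_cases b <;>
      simp only [e0, e1, e2, e3, e4, e5, Fin.mk_zero, Fin.mk_one] at hab <;>
      first
        | rfl
        | exact absurd hab (by tauto)
  · intro a b
    show G.Adj (f a) (f b) ↔ _
    rw [spAdj]
    fin_cases a <;> fin_cases b <;>
      simp only [e0, e1, e2, e3, e4, e5] <;>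
      first
        | exact iff_of_true (by assumption) (by decide)
        | exact iff_of_true ((by assumption : G.Adj _ _).symm) (by decide)
        | exact iff_of_false (by assumption) (by decide)
        | exact iff_of_false (fun h => absurd h.symm (by assumption)) (by decide)
        | exact iff_of_false (G.loopless.irrefl _) (by decide)

lemma p5_pattern (hfree : HFree (pathGraph 5) G) {x0 x1 x2 x3 x4 : V}
    (d02 : x0 ≠ x2) (d03 : x0 ≠ x3) (d04 : x0 ≠ x4) (d13 : x1 ≠ x3) (d14 : x1 ≠ x4)
    (d24 : x2 ≠ x4)
    (a01 : G.Adj x0 x1) (a12 : G.Adj x1 x2) (a23 : G.Adj x2 x3) (a34 : G.Adj x3 x4)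
    (n02 : ¬ G.Adj x0 x2) (n03 : ¬ G.Adj x0 x3) (n04 : ¬ G.Adj x0 x4)
    (n13 : ¬ G.Adj x1 x3) (n14 : ¬ G.Adj x1 x4) (n24 : ¬ G.Adj x2 x4) : False := by
  have d01 : x0 ≠ x1 := a01.ne
  have d12 : x1 ≠ x2 := a12.ne
  have d23 : x2 ≠ x3 := a23.ne
  have d34 : x3 ≠ x4 := a34.ne
  set f : Fin 5 → V := ![x0, x1, x2, x3, x4] with hf
  have e0 : f 0 = x0 := rfl
  have e1 : f 1 = x1 := rfl
  have e2 : f 2 = x2 := rfl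
  have e3 : f 3 = x3 := rfl
  have e4 : f 4 = x4 := rfl
  refine hfree.elim ⟨⟨f, ?_⟩, ?_⟩
  · intro a b hab
    fin_cases a <;> fin_cases b <;>
      simp only [e0, e1, e2, e3, e4, Fin.mk_zero, Fin.mk_one] at hab <;>
      first
        | rfl
        | exact absurd hab (by tauto)
  · intro a b
    show G.Adj (f a) (f b) ↔ _
    rw [pgAdj]
    fin_cases a <;> fin_cases b <;>
      simp only [e0, e1, e2, e3, e4] <;>
      first
        | exact iff_of_true (by assumption) (by decide)
        | exact iff_of_true ((by assumption : G.Adj _ _).symm) (by decide)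
        | exact iff_of_false (by assumption) (by decide)
        | exact iff_of_false (fun h => absurd h.symm (by assumption)) (by decide)
        | exact iff_of_false (G.loopless.irrefl _) (by decide)

lemma pair_insert [DecidableEq V] {P : V → V → Prop} (hsymm : ∀ {x y : V}, P x y → P y x)
    {K : Finset V} {a : V} (hall : ∀ b ∈ K, P a b) (hK : ∀ x ∈ K, ∀ y ∈ K, x ≠ y → P x y) :
    ∀ x ∈ insert a K, ∀ y ∈ insert a K, x ≠ y → P x y := by
  intro x hx y hy hxy
  rcases Finset.mem_insert.mp hx with hx' | hx' <;> rcases Finset.mem_insert.mp hy with hy' | hy'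
  · exact absurd (hx'.trans hy'.symm) hxy
  · exact hx' ▸ hall y hy'
  · exact hy' ▸ hsymm (hall x hx')
  · exact hK x hx' y hy' hxy

lemma ramsey_aux [DecidableEq V] (G : SimpleGraph V) [DecidableRel G.Adj] :
    ∀ (n s t : ℕ) (A : Finset V), s + t ≤ n → (s + t).choose s ≤ A.card →
      (∃ K ⊆ A, K.card = s ∧ ∀ a ∈ K, ∀ b ∈ K, a ≠ b → G.Adj a b) ∨
      (∃ I ⊆ A, I.card = t ∧ ∀ a ∈ I, ∀ b ∈ I, a ≠ b → ¬ G.Adj a b) := by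
  intro n
  induction n with
  | zero =>
    intro s t A hst _
    have hs : s = 0 := by omega
    subst hs
    exact Or.inl ⟨∅, by simp⟩
  | succ n IH =>
    intro s t A hst hcard
    match s, t with
    | 0, t => exact Or.inl ⟨∅, by simp⟩
    | s+1, 0 => exact Or.inr ⟨∅, by simp⟩
    | s+1, t+1 =>
      have hA : A.Nonempty := by
        rw [← Finset.card_pos]
        have := Nat.choose_pos (show s+1 ≤ (s+1)+(t+1) by omega)
        omega
      obtain ⟨a, ha⟩ := hA
      set B := (A.erase a).filter (fun b => G.Adj a b) with hB
      set C := (A.erase a).filter (fun b => ¬ G.Adj a b) with hC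
      have hBC : B.card + C.card = A.card - 1 := by
        rw [hB, hC, Finset.card_filter_add_card_filter_not, Finset.card_erase_of_mem ha]
      have hpas : ((s+1)+(t+1)).choose (s+1) = ((s)+(t+1)).choose s + ((s+1)+t).choose (s+1) := by
        have := Nat.choose_succ_succ' (s + t + 1) s
        have h1 : (s+1)+(t+1) = (s+t+1)+1 := by omega
        have h2 : s+(t+1) = s+t+1 := by omega
        have h3 : (s+1)+t = s+t+1 := by omega
        rw [h1, h2, h3, this]
      have hsplit : (s+(t+1)).choose s ≤ B.card ∨ ((s+1)+t).choose (s+1) ≤ C.card := by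
        by_contra hcon
        push_neg at hcon
        omega
      rcases hsplit with h | h
      · rcases IH s (t+1) B (by omega) h with ⟨K, hKB, hKcard, hKcl⟩ | ⟨I, hIB, hIcard, hIind⟩
        · refine Or.inl ⟨insert a K, ?_, ?_, ?_⟩
          · intro x hx
            rcases Finset.mem_insert.mp hx with rfl | hx
            · exact ha
            · exact (Finset.mem_of_mem_erase (Finset.mem_of_mem_filter x (hKB hx)))
          · rw [Finset.card_insert_of_notMem, hKcard]
            intro haK
            exact (Finset.notMem_erase a A) (Finset.mem_of_mem_filter a (hKB haK))
          · exact pair_insert (fun h => h.symm)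
              (fun b hb => (Finset.mem_filter.mp (hKB hb)).2) hKcl
        · exact Or.inr ⟨I, fun x hx => Finset.mem_of_mem_erase (Finset.mem_of_mem_filter x (hIB hx)),
            hIcard, hIind⟩
      · rcases IH (s+1) t C (by omega) h with ⟨K, hKC, hKcard, hKcl⟩ | ⟨I, hIC, hIcard, hIind⟩
        · exact Or.inl ⟨K, fun x hx => Finset.mem_of_mem_erase (Finset.mem_of_mem_filter x (hKC hx)),
            hKcard, hKcl⟩
        · refine Or.inr ⟨insert a I, ?_, ?_, ?_⟩
          · intro x hx
            rcases Finset.mem_insert.mp hx with rfl | hx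
            · exact ha
            · exact (Finset.mem_of_mem_erase (Finset.mem_of_mem_filter x (hIC hx)))
          · rw [Finset.card_insert_of_notMem, hIcard]
            intro haI
            exact (Finset.notMem_erase a A) (Finset.mem_of_mem_filter a (hIC haI))
          · exact pair_insert (fun h hadj => h hadj.symm)
              (fun b hb => (Finset.mem_filter.mp (hIC hb)).2) hIind

lemma ramsey' [DecidableEq V] (G : SimpleGraph V) [DecidableRel G.Adj] (s t : ℕ) (A : Finset V)
    (hcard : (s + t).choose s ≤ A.card) :
    (∃ K ⊆ A, K.card = s ∧ ∀ a ∈ K, ∀ b ∈ K, a ≠ b → G.Adj a b) ∨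
      (∃ I ⊆ A, I.card = t ∧ ∀ a ∈ I, ∀ b ∈ I, a ≠ b → ¬ G.Adj a b) :=
  ramsey_aux G (s+t) s t A le_rfl hcard

lemma four_of_card [DecidableEq V] (T : Finset V) (h : 4 ≤ T.card) :
    ∃ a ∈ T, ∃ b ∈ T, ∃ c ∈ T, ∃ d ∈ T,
      a ≠ b ∧ a ≠ c ∧ a ≠ d ∧ b ≠ c ∧ b ≠ d ∧ c ≠ d := by
  obtain ⟨a, ha⟩ : T.Nonempty := by rw [← Finset.card_pos]; omega
  have h1 : 3 ≤ (T.erase a).card := by rw [Finset.card_erase_of_mem ha]; omega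
  obtain ⟨b, hb⟩ : (T.erase a).Nonempty := by rw [← Finset.card_pos]; omega
  have h2 : 2 ≤ ((T.erase a).erase b).card := by rw [Finset.card_erase_of_mem hb]; omega
  obtain ⟨c, hc⟩ : ((T.erase a).erase b).Nonempty := by rw [← Finset.card_pos]; omega
  have h3 : 1 ≤ (((T.erase a).erase b).erase c).card := by
    rw [Finset.card_erase_of_mem hc]; omega
  obtain ⟨d, hd⟩ : (((T.erase a).erase b).erase c).Nonempty := by rw [← Finset.card_pos]; omega
  refine ⟨a, ha, b, Finset.mem_of_mem_erase hb,
    c, Finset.mem_of_mem_erase (Finset.mem_of_mem_erase hc),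
    d, Finset.mem_of_mem_erase (Finset.mem_of_mem_erase (Finset.mem_of_mem_erase hd)), ?_⟩
  have hba : b ≠ a := Finset.ne_of_mem_erase hb
  have hcb : c ≠ b := Finset.ne_of_mem_erase hc
  have hca : c ≠ a := Finset.ne_of_mem_erase (Finset.mem_of_mem_erase hc)
  have hdc : d ≠ c := Finset.ne_of_mem_erase hd
  have hdb : d ≠ b := Finset.ne_of_mem_erase (Finset.mem_of_mem_erase hd)
  have hda : d ≠ a := Finset.ne_of_mem_erase (Finset.mem_of_mem_erase (Finset.mem_of_mem_erase hd))
  exact ⟨hba.symm, hca.symm, hda.symm, hcb.symm, hdb.symm, hdc.symm⟩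

lemma colorable_zero_isempty (h : G.Colorable 0) : IsEmpty V := by
  obtain ⟨C⟩ := h
  exact ⟨fun v => (C v).elim0⟩

lemma combine_colorings {A : Set V} {m n : ℕ} (hA : (G.induce A).Colorable m)
    (hB : (G.induce Aᶜ).Colorable n) : G.Colorable (m + n) := by
  classical
  obtain ⟨f⟩ := hA
  obtain ⟨g⟩ := hB
  refine ⟨Coloring.mk (fun v => if h : v ∈ A then (f ⟨v, h⟩).castAdd n else (g ⟨v, h⟩).natAdd m) ?_⟩
  intro u v huv heq
  by_cases hu : u ∈ A <;> by_cases hv : v ∈ A <;> simp only [hu, hv, dif_pos, dif_neg,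
    not_false_iff] at heq
  · exact f.valid (by simp [huv] : (G.induce A).Adj ⟨u, hu⟩ ⟨v, hv⟩)
      (by simpa [Fin.ext_iff] using heq)
  · have h1 : ((f ⟨u, hu⟩).castAdd n : Fin (m+n)).val < m := (f ⟨u, hu⟩).isLt
    have h2 : ((g ⟨v, hv⟩).natAdd m : Fin (m+n)).val = m + (g ⟨v, hv⟩).val := rfl
    rw [Fin.ext_iff] at heq
    omega
  · have h1 : ((f ⟨v, hv⟩).castAdd n : Fin (m+n)).val < m := (f ⟨v, hv⟩).isLt
    have h2 : ((g ⟨u, hu⟩).natAdd m : Fin (m+n)).val = m + (g ⟨u, hu⟩).val := rfl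
    rw [Fin.ext_iff] at heq
    omega
  · exact g.valid (by simp [huv] : (G.induce Aᶜ).Adj ⟨u, hu⟩ ⟨v, hv⟩)
      (by simpa [Fin.ext_iff] using heq)

lemma split_coloring [Fintype V] {s t : Set V}
    (hcomp : ∀ a ∈ s, ∀ b ∈ t, G.Adj a b) {n : ℕ} (hc : (G.induce (s ∪ t)).Colorable n) :
    ∃ m₁ m₂ : ℕ, m₁ + m₂ ≤ n ∧ (G.induce s).Colorable m₁ ∧ (G.induce t).Colorable m₂ := by
  classical
  obtain ⟨C⟩ := hc
  set es : G.induce s ↪g G.induce (s ∪ t) := G.induceHomOfLE Set.subset_union_left with hes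
  set et : G.induce t ↪g G.induce (s ∪ t) := G.induceHomOfLE Set.subset_union_right with het
  have fintS : Fintype ↥s := Set.Finite.fintype (Set.toFinite s)
  have fintT : Fintype ↥t := Set.Finite.fintype (Set.toFinite t)
  set Cs : G.induce s →g (⊤ : SimpleGraph (Fin n)) := C.comp es.toHom with hCs
  set Ct : G.induce t →g (⊤ : SimpleGraph (Fin n)) := C.comp et.toHom with hCt
  set SS : Finset (Fin n) := Finset.univ.image Cs with hSS
  set ST : Finset (Fin n) := Finset.univ.image Ct with hST
  have hdisjc : Disjoint SS ST := by
    rw [Finset.disjoint_left]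
    rintro c hcS hcT
    obtain ⟨u, -, hu⟩ := Finset.mem_image.mp hcS
    obtain ⟨w, -, hw⟩ := Finset.mem_image.mp hcT
    have hadj : (G.induce (s ∪ t)).Adj (es u) (et w) := by
      have h1 : ((es u : ↥(s ∪ t)) : V) = (u : V) := by
        rw [hes, SimpleGraph.induceHomOfLE_apply, Set.coe_inclusion]
      have h2 : ((et w : ↥(s ∪ t)) : V) = (w : V) := by
        rw [het, SimpleGraph.induceHomOfLE_apply, Set.coe_inclusion]
      rw [SimpleGraph.comap_adj, Function.Embedding.coe_subtype, h1, h2]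
      exact hcomp u u.2 w w.2
    exact C.valid hadj (hu.trans hw.symm)
  have hcards : SS.card + ST.card ≤ n := by
    rw [← Finset.card_union_of_disjoint hdisjc]
    calc (SS ∪ ST).card ≤ (Finset.univ : Finset (Fin n)).card := Finset.card_le_univ _
      _ = n := by simp
  refine ⟨SS.card, ST.card, hcards, ?_, ?_⟩
  · have C1 : (G.induce s).Coloring ↥SS :=
      Coloring.mk (fun v => ⟨Cs v, Finset.mem_image_of_mem _ (Finset.mem_univ v)⟩)
        (fun hadj heq => Cs.map_rel hadj (by simpa [Subtype.ext_iff] using heq))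
    simpa [Fintype.card_coe] using C1.colorable
  · have C1 : (G.induce t).Coloring ↥ST :=
      Coloring.mk (fun v => ⟨Ct v, Finset.mem_image_of_mem _ (Finset.mem_univ v)⟩)
        (fun hadj heq => Ct.map_rel hadj (by simpa [Subtype.ext_iff] using heq))
    simpa [Fintype.card_coe] using C1.colorable

lemma preconnected_of_critical {m : ℕ} (hncol : ¬ G.Colorable m)
    (hdel : ∀ v : V, (G.induce {v}ᶜ).Colorable m) : G.Preconnected := by
  classical
  intro u v
  by_contra hreach
  obtain ⟨f⟩ := hdel v
  obtain ⟨g⟩ := hdel u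
  refine hncol ⟨Coloring.mk (fun x => if h : G.Reachable u x
    then f ⟨x, fun hxv => hreach (by rwa [Set.mem_singleton_iff.mp hxv] at h)⟩
    else g ⟨x, fun hxu => h (by rw [Set.mem_singleton_iff.mp hxu])⟩) ?_⟩
  intro x y hxy heq
  by_cases hx : G.Reachable u x
  · have hy : G.Reachable u y := hx.trans hxy.reachable
    rw [dif_pos hx, dif_pos hy] at heq
    exact f.valid (by simp [hxy] : (G.induce {v}ᶜ).Adj ⟨x, _⟩ ⟨y, _⟩) heq
  · have hy : ¬ G.Reachable u y := fun hy => hx (hy.trans hxy.symm.reachable)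
    rw [dif_neg hx, dif_neg hy] at heq
    exact g.valid (by simp [hxy] : (G.induce {u}ᶜ).Adj ⟨x, _⟩ ⟨y, _⟩) heq

lemma walk_split : ∀ {u v : V} (p : G.Walk u v) (i : ℕ),
    ∃ (q : G.Walk u (p.getVert i)) (r : G.Walk (p.getVert i) v),
      q.length + r.length = p.length ∧ (i ≤ p.length → q.length = i) := by
  intro u v p
  induction p with
  | nil =>
    intro i
    exact ⟨Walk.nil.copy rfl (by simp [Walk.getVert]),
      Walk.nil.copy (by simp [Walk.getVert]) rfl, by simp,
      fun hi => by simp at hi ⊢; omega⟩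
  | @cons a b c hab p IH =>
    intro i
    match i with
    | 0 =>
      exact ⟨Walk.nil.copy rfl (by simp), (Walk.cons hab p).copy (by simp) rfl, by simp, by simp⟩
    | (n+1) =>
      obtain ⟨q, r, hlen, hexact⟩ := IH n
      refine ⟨(Walk.cons hab q).copy rfl (by rw [Walk.getVert_cons_succ]),
        r.copy (by rw [Walk.getVert_cons_succ]) rfl, by simp [hlen]; omega, ?_⟩
      intro hi
      simp only [Walk.length_copy, Walk.length_cons]
      have := hexact (by simpa using Nat.succ_le_succ_iff.mp (by simpa using hi))
      omega

lemma dist_getVert (hconn : G.Connected) {u v : V} (p : G.Walk u v)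
    (hp : p.length = G.dist u v) {i : ℕ} (hi : i ≤ p.length) :
    G.dist u (p.getVert i) = i := by
  obtain ⟨q, r, hlen, hexact⟩ := walk_split p i
  have hq : q.length = i := hexact hi
  have h1 : G.dist u (p.getVert i) ≤ i := by
    have := SimpleGraph.dist_le q
    omega
  have h2 : G.dist (p.getVert i) v ≤ r.length := SimpleGraph.dist_le r
  have h3 : G.dist u v ≤ G.dist u (p.getVert i) + G.dist (p.getVert i) v :=
    hconn.dist_triangle
  omega

lemma dist_ge_two_facts (hconn : G.Connected) {u v : V} (p : G.Walk u v)
    (hp : p.length = G.dist u v) {i j : ℕ} (hij : i + 2 ≤ j) (hj : j ≤ p.length) :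
    p.getVert i ≠ p.getVert j ∧ ¬ G.Adj (p.getVert i) (p.getVert j) := by
  have hdi : G.dist u (p.getVert i) = i := dist_getVert hconn p hp (by omega)
  have hdj : G.dist u (p.getVert j) = j := dist_getVert hconn p hp hj
  have htri : G.dist u (p.getVert j) ≤ G.dist u (p.getVert i)
      + G.dist (p.getVert i) (p.getVert j) := hconn.dist_triangle
  constructor
  · intro heq
    rw [heq] at hdi
    omega
  · intro hadj
    have : G.dist (p.getVert i) (p.getVert j) = 1 := SimpleGraph.dist_eq_one_iff_adj.mpr hadj
    omega

lemma dist_le_three (hP5 : HFree (pathGraph 5) G) (hconn : G.Connected) (u v : V) :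
    G.dist u v ≤ 3 := by
  by_contra h
  push_neg at h
  obtain ⟨p, hp⟩ := hconn.exists_walk_length_eq_dist u v
  have hlen : 4 ≤ p.length := by omega
  have a01 : G.Adj (p.getVert 0) (p.getVert 1) := p.adj_getVert_succ (by omega)
  have a12 : G.Adj (p.getVert 1) (p.getVert 2) := p.adj_getVert_succ (by omega)
  have a23 : G.Adj (p.getVert 2) (p.getVert 3) := p.adj_getVert_succ (by omega)
  have a34 : G.Adj (p.getVert 3) (p.getVert 4) := p.adj_getVert_succ (by omega)
  obtain ⟨d02, n02⟩ := dist_ge_two_facts hconn p hp (by omega : 0+2 ≤ 2) (by omega)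
  obtain ⟨d03, n03⟩ := dist_ge_two_facts hconn p hp (by omega : 0+2 ≤ 3) (by omega)
  obtain ⟨d04, n04⟩ := dist_ge_two_facts hconn p hp (by omega : 0+2 ≤ 4) (by omega)
  obtain ⟨d13, n13⟩ := dist_ge_two_facts hconn p hp (by omega : 1+2 ≤ 3) (by omega)
  obtain ⟨d14, n14⟩ := dist_ge_two_facts hconn p hp (by omega : 1+2 ≤ 4) (by omega)
  obtain ⟨d24, n24⟩ := dist_ge_two_facts hconn p hp (by omega : 2+2 ≤ 4) (by omega)
  exact p5_pattern hP5 d02 d03 d04 d13 d14 d24 a01 a12 a23 a34 n02 n03 n04 n13 n14 n24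

lemma colorable_induce_induce {A : Set V} (a : ↥A) {n : ℕ}
    (h : (G.induce (A \ {(a : V)})).Colorable n) :
    ((G.induce A).induce {a}ᶜ).Colorable n := by
  refine Colorable.of_hom (G' := G.induce (A \ {(a : V)})) (Embedding.toHom ⟨⟨fun x => ⟨(x : ↥A), (x : ↥A).2, fun hx => x.2 (by
      simp only [Set.mem_singleton_iff] at hx ⊢
      exact Subtype.ext hx)⟩, ?_⟩, ?_⟩) h
  · intro x y hxy
    apply Subtype.ext
    apply Subtype.ext
    simpa [Subtype.ext_iff] using hxy
  · intro x y
    show G.Adj _ _ ↔ G.Adj _ _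
    rfl

lemma hfree_induce {W : Type*} {H : SimpleGraph W} (hfree : HFree H G) (A : Set V) :
    HFree H (G.induce A) := by
  constructor
  intro e
  exact hfree.false ((Embedding.induce A).comp e)

lemma card_set_compl (A : Set V) [Fintype V] [Fintype ↥A] [Fintype ↥Aᶜ] :
    Fintype.card ↥A + Fintype.card ↥Aᶜ = Fintype.card V := by
  classical
  rw [← Fintype.card_sum]
  exact (Fintype.card_congr (Equiv.sumCompl (· ∈ A)))

lemma exists_far [Fintype V] [DecidableEq V] [DecidableRel G.Adj] (S : Finset V) (l : List V)
    (hlen : l.length ≤ 5) (hlight : ∀ x ∈ l, (S.filter (fun y => G.Adj x y)).card ≤ 3)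
    (y1 : V) (hcard : 17 ≤ S.card) :
    ∃ w ∈ S, w ≠ y1 ∧ ∀ x ∈ l, ¬ G.Adj x w := by
  classical
  set T := insert y1 (l.toFinset.biUnion (fun x => S.filter (fun y => G.Adj x y))) with hT
  have hTcard : T.card ≤ 16 := by
    rw [hT]
    have hb := Finset.card_biUnion_le (s := l.toFinset)
      (t := fun x => S.filter (fun y => G.Adj x y))
    have hsum : (∑ x ∈ l.toFinset, (S.filter (fun y => G.Adj x y)).card)
        ≤ l.toFinset.card * 3 := by
      calc (∑ x ∈ l.toFinset, (S.filter (fun y => G.Adj x y)).card)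
          ≤ ∑ _x ∈ l.toFinset, 3 :=
            Finset.sum_le_sum (fun x hx => hlight x (List.mem_toFinset.mp hx))
        _ = l.toFinset.card * 3 := by rw [Finset.sum_const, smul_eq_mul]
    have hlf : l.toFinset.card ≤ 5 := le_trans l.toFinset_card_le hlen
    have := Finset.card_insert_le y1 (l.toFinset.biUnion (fun x => S.filter (fun y => G.Adj x y)))
    omega
  have hne : (S \ T).Nonempty := by
    rw [← Finset.card_pos]
    have := Finset.le_card_sdiff T S
    omega
  obtain ⟨w, hw⟩ := hne
  have hwS : w ∈ S := (Finset.mem_sdiff.mp hw).1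
  have hwT : w ∉ T := (Finset.mem_sdiff.mp hw).2
  refine ⟨w, hwS, ?_, ?_⟩
  · intro h
    exact hwT (by rw [h]; exact Finset.mem_insert_self _ _)
  · intro x hx hadj
    exact hwT (Finset.mem_insert_of_mem (Finset.mem_biUnion.mpr
      ⟨x, List.mem_toFinset.mpr hx, Finset.mem_filter.mpr ⟨hwS, hadj⟩⟩))

/-- the key Ramsey-type bound: a set of vertices, disjoint from the independent set `S`,
all adjacent to a common center and all with few neighbours in `S`, is small. -/
lemma card_le_RT {k : ℕ} [Fintype V] [DecidableEq V] [DecidableRel G.Adj]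
    (hK14 : HFree (starPlusP1 4) G) (hCF : G.CliqueFree (k+1))
    (S : Finset V) (hSind : ∀ a ∈ S, ∀ b ∈ S, a ≠ b → ¬ G.Adj a b) (hScard : 17 ≤ S.card)
    (ctr : V) (hctrlight : (S.filter (fun y => G.Adj ctr y)).card ≤ 3)
    (X : Finset V) (hXadj : ∀ x ∈ X, G.Adj ctr x) (hXs : ∀ x ∈ X, x ∉ S)
    (hXlight : ∀ x ∈ X, (S.filter (fun y => G.Adj x y)).card ≤ 3) :
    X.card < (k+1+4).choose (k+1) := by
  by_contra hbig
  push_neg at hbig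
  rcases ramsey' G (k+1) 4 X hbig with ⟨K, hKX, hKcard, hKcl⟩ | ⟨I, hIX, hIcard, hIind⟩
  · exact hCF K ⟨fun a ha b hb hab => hKcl a (Finset.mem_coe.mp ha) b (Finset.mem_coe.mp hb) hab,
      hKcard⟩
  · obtain ⟨d1, hd1, d2, hd2, d3, hd3, d4, hd4, h12, h13, h14, h23, h24, h34⟩ :=
      four_of_card I (by omega)
    have hd1X := hIX hd1
    have hd2X := hIX hd2
    have hd3X := hIX hd3
    have hd4X := hIX hd4
    obtain ⟨w, hwS, hwctr, hwfar⟩ := exists_far S [d1, d2, d3, d4, ctr] (by simp)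
      (by
        intro x hx
        simp only [List.mem_cons, List.mem_singleton] at hx
        rcases hx with rfl | rfl | rfl | rfl | rfl | h
        · exact hXlight _ hd1X
        · exact hXlight _ hd2X
        · exact hXlight _ hd3X
        · exact hXlight _ hd4X
        · exact hctrlight
        · exact absurd h List.not_mem_nil) ctr hScard
    refine star_pattern hK14 h12 h13 h14 h23 h24 h34 hwctr
      (fun h => (hXs _ hd1X) (h ▸ hwS)) (fun h => (hXs _ hd2X) (h ▸ hwS))
      (fun h => (hXs _ hd3X) (h ▸ hwS)) (fun h => (hXs _ hd4X) (h ▸ hwS))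
      (hXadj _ hd1X) (hXadj _ hd2X) (hXadj _ hd3X) (hXadj _ hd4X)
      (hIind _ hd1 _ hd2 h12) (hIind _ hd1 _ hd3 h13) (hIind _ hd1 _ hd4 h14)
      (hIind _ hd2 _ hd3 h23) (hIind _ hd2 _ hd4 h24) (hIind _ hd3 _ hd4 h34)
      (hwfar ctr (by simp)) (hwfar d1 (by simp)) (hwfar d2 (by simp)) (hwfar d3 (by simp))
      (hwfar d4 (by simp))



def Good (k : ℕ) : Prop := ∃ N : ℕ, ∀ (V : Type) [Fintype V] (G : SimpleGraph V),
    HFree (pathGraph 5) G → HFree (starPlusP1 4) G → G.Colorable k →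
    ¬ G.Colorable (k - 1) → (∀ v : V, (G.induce {v}ᶜ).Colorable (k - 1)) →
    Fintype.card V ≤ N

theorem good_step (k : ℕ) (hk : 1 ≤ k) (IH : ∀ j, j < k → Good j) : Good k := by
  classical
  have IH' : ∀ j : ℕ, ∃ M : ℕ, j < k → ∀ (V : Type) [Fintype V] (G : SimpleGraph V),
      HFree (pathGraph 5) G → HFree (starPlusP1 4) G → G.Colorable j →
      ¬ G.Colorable (j - 1) → (∀ v : V, (G.induce {v}ᶜ).Colorable (j - 1)) →
      Fintype.card V ≤ M := by
    intro j
    by_cases hj : j < k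
    · obtain ⟨M, hM⟩ := IH j hj
      exact ⟨M, fun _ => hM⟩
    · exact ⟨0, fun h => absurd h hj⟩
  choose Nf hNf using IH'
  set RT := (k+1+4).choose (k+1) with hRT
  set f := 17 + 3 * RT + 3 * (RT * RT) with hf
  set RB := (k+1+(f+1)).choose (k+1) with hRB
  refine ⟨max RB ((Finset.range (k+1)).sup (fun j => Nf j + Nf (k - j))), ?_⟩
  intro V _ G hP5 hK14 hcol hncol hdel
  have hCF : G.CliqueFree (k+1) := hcol.cliqueFree (lt_add_one k)
  rcases em (∃ S : Finset V, (∀ a ∈ S, ∀ b ∈ S, a ≠ b → ¬ G.Adj a b) ∧ S.card = f + 1)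
    with hbig | hbig
  swap
  · -- no large independent set: Ramsey bound
    by_contra hcard
    push_neg at hcard
    have hRBle : RB ≤ (Finset.univ : Finset V).card := by
      rw [Finset.card_univ]
      have h1 := le_max_left RB ((Finset.range (k+1)).sup (fun j => Nf j + Nf (k - j)))
      omega
    rcases ramsey' G (k+1) (f+1) Finset.univ hRBle with ⟨K, -, hKcard, hKcl⟩ |
      ⟨I, -, hIcard, hIind⟩
    · exact hCF K ⟨fun a ha b hb hab =>
        hKcl a (Finset.mem_coe.mp ha) b (Finset.mem_coe.mp hb) hab, hKcard⟩
    · exact hbig ⟨I, hIind, hIcard⟩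
  obtain ⟨S, hSind, hScard⟩ := hbig
  have hfge : 17 ≤ f := by rw [hf]; omega
  have hS17 : 17 ≤ S.card := by omega
  -- dichotomy: every vertex outside S is "light" or "full"
  have hSlight : ∀ z, z ∉ S → (¬ ∀ y ∈ S, G.Adj z y) →
      (S.filter (fun y => G.Adj z y)).card ≤ 3 := by
    intro z hzS hznotfull
    by_contra h4
    push_neg at h4
    obtain ⟨p1, hp1, p2, hp2, p3, hp3, p4, hp4, g12, g13, g14, g23, g24, g34⟩ :=
      four_of_card (S.filter (fun y => G.Adj z y)) (by omega)
    push_neg at hznotfull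
    obtain ⟨y, hyS, hny⟩ := hznotfull
    have m1 := Finset.mem_filter.mp hp1
    have m2 := Finset.mem_filter.mp hp2
    have m3 := Finset.mem_filter.mp hp3
    have m4 := Finset.mem_filter.mp hp4
    have hy1 : y ≠ p1 := fun h => hny (by rw [h]; exact m1.2)
    have hy2 : y ≠ p2 := fun h => hny (by rw [h]; exact m2.2)
    have hy3 : y ≠ p3 := fun h => hny (by rw [h]; exact m3.2)
    have hy4 : y ≠ p4 := fun h => hny (by rw [h]; exact m4.2)
    exact star_pattern hK14 g12 g13 g14 g23 g24 g34
      (fun h => hzS (by rw [← h]; exact hyS)) hy1 hy2 hy3 hy4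
      m1.2 m2.2 m3.2 m4.2
      (hSind p1 m1.1 p2 m2.1 g12) (hSind p1 m1.1 p3 m3.1 g13) (hSind p1 m1.1 p4 m4.1 g14)
      (hSind p2 m2.1 p3 m3.1 g23) (hSind p2 m2.1 p4 m4.1 g24) (hSind p3 m3.1 p4 m4.1 g34)
      hny
      (hSind p1 m1.1 y hyS (Ne.symm hy1)) (hSind p2 m2.1 y hyS (Ne.symm hy2))
      (hSind p3 m3.1 y hyS (Ne.symm hy3)) (hSind p4 m4.1 y hyS (Ne.symm hy4))
  set Full : Set V := {z | z ∉ S ∧ ∀ y ∈ S, G.Adj z y} with hFulldef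
  by_cases hFull : Full.Nonempty
  · -- JOIN CASE
    have hcomp : ∀ a ∈ Full, ∀ b ∈ Fullᶜ, G.Adj a b := by
      intro a ha b hb
      by_cases hbS : b ∈ S
      · exact ha.2 b hbS
      · have hbnf : ¬ ∀ y ∈ S, G.Adj b y := fun hfl => hb ⟨hbS, hfl⟩
        have hblight := hSlight b hbS hbnf
        by_contra hnadj
        have hTcard : 4 ≤ (S \ S.filter (fun y => G.Adj b y)).card := by
          rw [Finset.card_sdiff_of_subset (Finset.filter_subset _ _)]
          omega
        obtain ⟨p1, hp1, p2, hp2, p3, hp3, p4, hp4, g12, g13, g14, g23, g24, g34⟩ :=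
          four_of_card _ hTcard
        have m1 := Finset.mem_sdiff.mp hp1
        have m2 := Finset.mem_sdiff.mp hp2
        have m3 := Finset.mem_sdiff.mp hp3
        have m4 := Finset.mem_sdiff.mp hp4
        have nb1 : ¬ G.Adj b p1 := fun h => m1.2 (Finset.mem_filter.mpr ⟨m1.1, h⟩)
        have nb2 : ¬ G.Adj b p2 := fun h => m2.2 (Finset.mem_filter.mpr ⟨m2.1, h⟩)
        have nb3 : ¬ G.Adj b p3 := fun h => m3.2 (Finset.mem_filter.mpr ⟨m3.1, h⟩)
        have nb4 : ¬ G.Adj b p4 := fun h => m4.2 (Finset.mem_filter.mpr ⟨m4.1, h⟩)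
        exact star_pattern hK14 g12 g13 g14 g23 g24 g34
          (fun h => hb (show b ∈ Full by rw [h]; exact ha))
          (fun h => hbS (by rw [h]; exact m1.1)) (fun h => hbS (by rw [h]; exact m2.1))
          (fun h => hbS (by rw [h]; exact m3.1)) (fun h => hbS (by rw [h]; exact m4.1))
          (ha.2 p1 m1.1) (ha.2 p2 m2.1) (ha.2 p3 m3.1) (ha.2 p4 m4.1)
          (hSind p1 m1.1 p2 m2.1 g12) (hSind p1 m1.1 p3 m3.1 g13) (hSind p1 m1.1 p4 m4.1 g14)
          (hSind p2 m2.1 p3 m3.1 g23) (hSind p2 m2.1 p4 m4.1 g24) (hSind p3 m3.1 p4 m4.1 g34)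
          hnadj
          (fun h => nb1 h.symm) (fun h => nb2 h.symm) (fun h => nb3 h.symm)
          (fun h => nb4 h.symm)
    haveI instA : Fintype ↥Full := Set.Finite.fintype (Set.toFinite _)
    haveI instB : Fintype ↥(Fullᶜ) := Set.Finite.fintype (Set.toFinite _)
    have hexA : ∃ m, (G.induce Full).Colorable m :=
      ⟨Fintype.card ↥Full, (G.induce Full).colorable_of_fintype⟩
    have hexB : ∃ m, (G.induce Fullᶜ).Colorable m :=
      ⟨Fintype.card ↥(Fullᶜ), (G.induce Fullᶜ).colorable_of_fintype⟩
    obtain ⟨kA, hcolA, hminA, hleA⟩ : ∃ m, (G.induce Full).Colorable m ∧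
        (∀ l, l < m → ¬ (G.induce Full).Colorable l) ∧
        (∀ l, (G.induce Full).Colorable l → m ≤ l) :=
      ⟨Nat.find hexA, Nat.find_spec hexA, fun l hl => Nat.find_min hexA hl,
        fun l hl => Nat.find_min' hexA hl⟩
    obtain ⟨kB, hcolB, hminB, hleB⟩ : ∃ m, (G.induce Fullᶜ).Colorable m ∧
        (∀ l, l < m → ¬ (G.induce Fullᶜ).Colorable l) ∧
        (∀ l, (G.induce Fullᶜ).Colorable l → m ≤ l) :=
      ⟨Nat.find hexB, Nat.find_spec hexB, fun l hl => Nat.find_min hexB hl,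
        fun l hl => Nat.find_min' hexB hl⟩
    have hkA1 : 1 ≤ kA := by
      by_contra h
      obtain ⟨x, hx⟩ := hFull
      exact (colorable_zero_isempty
        ((show kA = 0 by omega) ▸ hcolA)).false ⟨x, hx⟩
    have hSne : S.Nonempty := by rw [← Finset.card_pos]; omega
    obtain ⟨y1, hy1⟩ := hSne
    have hkB1 : 1 ≤ kB := by
      by_contra h
      exact (colorable_zero_isempty
        ((show kB = 0 by omega) ▸ hcolB)).false ⟨y1, fun hc => hc.1 hy1⟩
    have hcolU : (G.induce (Full ∪ Fullᶜ)).Colorable k := by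
      rw [Set.union_compl_self]
      exact Colorable.of_hom (SimpleGraph.Embedding.induce Set.univ).toHom hcol
    obtain ⟨m₁, m₂, hm, hcm1, hcm2⟩ := split_coloring hcomp hcolU
    have hkAle : kA ≤ m₁ := hleA m₁ hcm1
    have hkBle : kB ≤ m₂ := hleB m₂ hcm2
    have hsum : kA + kB = k := by
      have hge : k ≤ kA + kB := by
        by_contra hlt
        push_neg at hlt
        exact hncol ((combine_colorings hcolA hcolB).mono (by omega))
      omega
    have hdelA : ∀ v : ↥Full, ((G.induce Full).induce {v}ᶜ).Colorable (kA - 1) := by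
      intro v
      apply colorable_induce_induce
      have hu : (Full \ {(v : V)}) ∪ Fullᶜ = ({(v : V)}ᶜ : Set V) := by
        ext z
        simp only [Set.mem_union, Set.mem_diff, Set.mem_singleton_iff, Set.mem_compl_iff]
        constructor
        · rintro (⟨_, hz⟩ | hz)
          · exact hz
          · intro he
            exact hz (he ▸ v.2)
        · intro hz
          by_cases hzF : z ∈ Full
          · exact Or.inl ⟨hzF, hz⟩
          · exact Or.inr hzF
      have hcolu : (G.induce ((Full \ {(v : V)}) ∪ Fullᶜ)).Colorable (k - 1) := by
        rw [hu]
        exact hdel (v : V)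
      obtain ⟨n₁, n₂, hn, h1, h2⟩ := split_coloring (fun a ha b hb => hcomp a ha.1 b hb) hcolu
      have hkb2 : kB ≤ n₂ := hleB n₂ h2
      exact h1.mono (by omega)
    have hdelB : ∀ v : ↥(Fullᶜ), ((G.induce Fullᶜ).induce {v}ᶜ).Colorable (kB - 1) := by
      intro v
      apply colorable_induce_induce
      have hu : Full ∪ (Fullᶜ \ {(v : V)}) = ({(v : V)}ᶜ : Set V) := by
        ext z
        simp only [Set.mem_union, Set.mem_diff, Set.mem_singleton_iff, Set.mem_compl_iff]
        constructor
        · rintro (hz | ⟨_, hz⟩)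
          · intro he
            exact v.2 (he ▸ hz)
          · exact hz
        · intro hz
          by_cases hzF : z ∈ Full
          · exact Or.inl hzF
          · exact Or.inr ⟨hzF, hz⟩
      have hcolu : (G.induce (Full ∪ (Fullᶜ \ {(v : V)}))).Colorable (k - 1) := by
        rw [hu]
        exact hdel (v : V)
      obtain ⟨n₁, n₂, hn, h1, h2⟩ := split_coloring (fun a ha b hb => hcomp a ha b hb.1) hcolu
      have hka1 : kA ≤ n₁ := hleA n₁ h1
      exact h2.mono (by omega)
    have hcardA : Fintype.card ↥Full ≤ Nf kA :=
      hNf kA (by omega) ↥Full (G.induce Full) (hfree_induce hP5 _) (hfree_induce hK14 _)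
        hcolA (hminA (kA - 1) (by omega)) hdelA
    have hcardB : Fintype.card ↥(Fullᶜ) ≤ Nf kB :=
      hNf kB (by omega) ↥(Fullᶜ) (G.induce Fullᶜ) (hfree_induce hP5 _) (hfree_induce hK14 _)
        hcolB (hminB (kB - 1) (by omega)) hdelB
    have hcards := card_set_compl Full (V := V)
    have hkBeq : kB = k - kA := by omega
    have hkAltk : kA < k + 1 := by omega
    have hmem : kA ∈ Finset.range (k+1) := Finset.mem_range.mpr hkAltk
    have hsup : Nf kA + Nf (k - kA) ≤ (Finset.range (k+1)).sup (fun j => Nf j + Nf (k - j)) :=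
      Finset.le_sup (f := fun j => Nf j + Nf (k - j)) hmem
    have hmax := le_max_right RB ((Finset.range (k+1)).sup (fun j => Nf j + Nf (k - j)))
    rw [hkBeq] at hcardB
    omega
  · -- NO FULL VERTEX: contradiction with the size of S
    exfalso
    have hlight : ∀ z, z ∉ S → (S.filter (fun y => G.Adj z y)).card ≤ 3 :=
      fun z hz => hSlight z hz (fun hfl => hFull ⟨z, hz, hfl⟩)
    have hSne : S.Nonempty := by rw [← Finset.card_pos]; omega
    obtain ⟨y1, hy1⟩ := hSne
    have hpre : G.Preconnected := preconnected_of_critical hncol hdel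
    haveI : Nonempty V := ⟨y1⟩
    have hconn : G.Connected := ⟨hpre⟩
    have hy1light : (S.filter (fun y => G.Adj y1 y)).card ≤ 3 := by
      have hemp : S.filter (fun y => G.Adj y1 y) = ∅ := by
        apply Finset.filter_eq_empty_iff.mpr
        intro y hyS
        by_cases h : y = y1
        · rw [h]
          exact G.loopless.irrefl y1
        · exact hSind y1 hy1 y hyS (Ne.symm h)
      rw [hemp]
      simp
    have hdist23 : ∀ y ∈ S.erase y1, G.dist y1 y = 2 ∨ G.dist y1 y = 3 := by
      intro y hy
      have hyS := Finset.mem_of_mem_erase hy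
      have hne : y ≠ y1 := Finset.ne_of_mem_erase hy
      have hd3 := dist_le_three hP5 hconn y1 y
      have hnadj : ¬ G.Adj y1 y := hSind y1 hy1 y hyS (Ne.symm hne)
      have h0 : G.dist y1 y ≠ 0 := by
        rw [SimpleGraph.dist_ne_zero_iff_ne_and_reachable]
        exact ⟨Ne.symm hne, hpre y1 y⟩
      have h1 : G.dist y1 y ≠ 1 := fun h => hnadj (SimpleGraph.dist_eq_one_iff_adj.mp h)
      omega
    set D2 := (S.erase y1).filter (fun y => G.dist y1 y = 2) with hD2def
    set D3 := (S.erase y1).filter (fun y => G.dist y1 y = 3) with hD3def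
    have hcover : (S.erase y1).card ≤ D2.card + D3.card := by
      have hsub : S.erase y1 ⊆ D2 ∪ D3 := by
        intro y hy
        rcases hdist23 y hy with h | h
        · exact Finset.mem_union_left _ (Finset.mem_filter.mpr ⟨hy, h⟩)
        · exact Finset.mem_union_right _ (Finset.mem_filter.mpr ⟨hy, h⟩)
      calc (S.erase y1).card ≤ (D2 ∪ D3).card := Finset.card_le_card hsub
        _ ≤ D2.card + D3.card := Finset.card_union_le _ _
    -- common neighbours for distance-2 vertices
    have hex2 : ∀ y : V, ∃ c : V, y ∈ D2 → (G.Adj y1 c ∧ G.Adj c y) := by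
      intro y
      by_cases hy : y ∈ D2
      · have hd : G.dist y1 y = 2 := (Finset.mem_filter.mp hy).2
        obtain ⟨p, hp⟩ := (hpre y1 y).exists_walk_length_eq_dist
        have hplen : p.length = 2 := by rw [hp, hd]
        refine ⟨p.getVert 1, fun _ => ⟨?_, ?_⟩⟩
        · have h01 := p.adj_getVert_succ (i := 0) (by omega)
          rwa [p.getVert_zero] at h01
        · have h12 := p.adj_getVert_succ (i := 1) (by omega)
          rwa [show p.getVert 2 = y from by rw [← hplen]; exact p.getVert_length] at h12
      · exact ⟨y1, fun h => absurd h hy⟩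
    choose c2 hc2 using hex2
    set C2 := D2.image c2 with hC2def
    have hC2adj : ∀ x ∈ C2, G.Adj y1 x := by
      intro x hx
      obtain ⟨y, hy, rfl⟩ := Finset.mem_image.mp hx
      exact (hc2 y hy).1
    have hC2nS : ∀ x ∈ C2, x ∉ S := by
      intro x hx hxS
      exact hSind y1 hy1 x hxS (hC2adj x hx).ne (hC2adj x hx)
    have hC2card : C2.card < RT := by
      rw [hRT]
      exact card_le_RT hK14 hCF S hSind hS17 y1 hy1light C2 hC2adj hC2nS
        (fun x hx => hlight x (hC2nS x hx))
    have hD2card : D2.card ≤ 3 * C2.card := by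
      apply Finset.card_le_mul_card_image
      intro d hd
      have hdnS : d ∉ S := hC2nS d hd
      calc (D2.filter (fun y => c2 y = d)).card
          ≤ (S.filter (fun y => G.Adj d y)).card := by
            apply Finset.card_le_card
            intro y hy
            have hy' := Finset.mem_filter.mp hy
            refine Finset.mem_filter.mpr ⟨?_, ?_⟩
            · exact Finset.mem_of_mem_erase (Finset.mem_of_mem_filter y hy'.1)
            · rw [← hy'.2]
              exact (hc2 y hy'.1).2
        _ ≤ 3 := hlight d hdnS
    -- distance-3 vertices
    have hex3 : ∀ y : V, ∃ a b : V, y ∈ D3 → (G.Adj y1 a ∧ G.Adj a b ∧ G.Adj b y) := by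
      intro y
      by_cases hy : y ∈ D3
      · have hd : G.dist y1 y = 3 := (Finset.mem_filter.mp hy).2
        obtain ⟨p, hp⟩ := (hpre y1 y).exists_walk_length_eq_dist
        have hplen : p.length = 3 := by rw [hp, hd]
        refine ⟨p.getVert 1, p.getVert 2, fun _ => ⟨?_, ?_, ?_⟩⟩
        · have h01 := p.adj_getVert_succ (i := 0) (by omega)
          rwa [p.getVert_zero] at h01
        · exact p.adj_getVert_succ (i := 1) (by omega)
        · have h23 := p.adj_getVert_succ (i := 2) (by omega)
          rwa [show p.getVert 3 = y from by rw [← hplen]; exact p.getVert_length] at h23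
      · exact ⟨y1, y1, fun h => absurd h hy⟩
    choose a3 b3 h3 using hex3
    set A3 := D3.image a3 with hA3def
    have hA3adj : ∀ x ∈ A3, G.Adj y1 x := by
      intro x hx
      obtain ⟨y, hy, rfl⟩ := Finset.mem_image.mp hx
      exact (h3 y hy).1
    have hA3nS : ∀ x ∈ A3, x ∉ S := by
      intro x hx hxS
      exact hSind y1 hy1 x hxS (hA3adj x hx).ne (hA3adj x hx)
    have hA3card : A3.card < RT := by
      rw [hRT]
      exact card_le_RT hK14 hCF S hSind hS17 y1 hy1light A3 hA3adj hA3nS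
        (fun x hx => hlight x (hA3nS x hx))
    have hD3card : D3.card ≤ (3 * (RT - 1)) * A3.card := by
      apply Finset.card_le_mul_card_image
      intro a ha
      have hanS : a ∉ S := hA3nS a ha
      set Da := D3.filter (fun y => a3 y = a) with hDadef
      set Ba := Da.image b3 with hBadef
      have hBaadj : ∀ x ∈ Ba, G.Adj a x := by
        intro x hx
        obtain ⟨y, hy, rfl⟩ := Finset.mem_image.mp hx
        have hy' := Finset.mem_filter.mp hy
        have := (h3 y hy'.1).2.1
        rwa [hy'.2] at this
      have hBanS : ∀ x ∈ Ba, x ∉ S := by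
        intro x hx hxS
        obtain ⟨y, hy, rfl⟩ := Finset.mem_image.mp hx
        have hy' := Finset.mem_filter.mp hy
        have hadj : G.Adj (b3 y) y := (h3 y hy'.1).2.2
        have hyS : y ∈ S := Finset.mem_of_mem_erase (Finset.mem_of_mem_filter y hy'.1)
        exact hSind (b3 y) hxS y hyS hadj.ne hadj
      have hBacard : Ba.card < RT := by
        rw [hRT]
        exact card_le_RT hK14 hCF S hSind hS17 a (hlight a hanS) Ba hBaadj hBanS
          (fun x hx => hlight x (hBanS x hx))
      have hDacard : Da.card ≤ 3 * Ba.card := by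
        apply Finset.card_le_mul_card_image
        intro b hb
        have hbnS : b ∉ S := hBanS b hb
        calc (Da.filter (fun y => b3 y = b)).card
            ≤ (S.filter (fun y => G.Adj b y)).card := by
              apply Finset.card_le_card
              intro y hy
              have hy' := Finset.mem_filter.mp hy
              have hy'' := Finset.mem_filter.mp hy'.1
              refine Finset.mem_filter.mpr ⟨?_, ?_⟩
              · exact Finset.mem_of_mem_erase (Finset.mem_of_mem_filter y hy''.1)
              · rw [← hy'.2]
                exact (h3 y hy''.1).2.2
          _ ≤ 3 := hlight b hbnS
      calc Da.card ≤ 3 * Ba.card := hDacard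
        _ ≤ 3 * (RT - 1) := by omega
    -- final count
    have hC2le : C2.card ≤ RT - 1 := by omega
    have hA3le : A3.card ≤ RT - 1 := by omega
    have hD2' : D2.card ≤ 3 * (RT - 1) := by
      calc D2.card ≤ 3 * C2.card := hD2card
        _ ≤ 3 * (RT - 1) := by omega
    have hD3' : D3.card ≤ (3 * (RT - 1)) * (RT - 1) := by
      calc D3.card ≤ (3 * (RT - 1)) * A3.card := hD3card
        _ ≤ (3 * (RT - 1)) * (RT - 1) :=
          Nat.mul_le_mul_left _ hA3le
    have hprod : (3 * (RT - 1)) * (RT - 1) ≤ 3 * (RT * RT) := by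
      calc (3 * (RT - 1)) * (RT - 1) ≤ (3 * RT) * RT :=
        Nat.mul_le_mul (Nat.mul_le_mul_left 3 (Nat.sub_le RT 1)) (Nat.sub_le RT 1)
        _ = 3 * (RT * RT) := by ring
    have herase : (S.erase y1).card = S.card - 1 := Finset.card_erase_of_mem hy1
    omega

theorem good_all : ∀ k : ℕ, Good k := by
  intro k
  induction k using Nat.strong_induction_on with
  | _ k IH =>
    rcases Nat.eq_zero_or_pos k with rfl | hk
    · exact ⟨0, fun V _ G _ _ hcol hncol _ => absurd hcol hncol⟩
    · exact good_step k hk IH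

end Stmt15Aux

theorem stmt15 (k : ℕ) (hk : 1 ≤ k) : ∃ N : ℕ,
    ∀ (V : Type) [Fintype V] (G : SimpleGraph V),
      IsKVertexCritical G k → HFree (pathGraph 5) G → HFree (starPlusP1 4) G →
      Fintype.card V ≤ N := by
  obtain ⟨N, hN⟩ := Stmt15Aux.good_all k
  refine ⟨N, ?_⟩
  intro V _ G hcrit hP5 hK14
  obtain ⟨hχ, hlt⟩ := hcrit
  have hcol : G.Colorable k := chromaticNumber_le_iff_colorable.mp (le_of_eq hχ)
  have hncol : ¬ G.Colorable (k - 1) := by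
    intro hc
    have h1 := hc.chromaticNumber_le
    rw [hχ] at h1
    have h2 : k ≤ k - 1 := Nat.cast_le.mp h1
    omega
  have hdel : ∀ v : V, (G.induce {v}ᶜ).Colorable (k - 1) := by
    intro v
    have hv := hlt v
    have hne : (G.induce {v}ᶜ).chromaticNumber ≠ ⊤ := ne_top_of_lt hv
    lift (G.induce {v}ᶜ).chromaticNumber to ℕ using hne with m hm
    have hmk : m < k := by exact_mod_cast hv
    have hcolm : (G.induce {v}ᶜ).Colorable m :=
      chromaticNumber_le_iff_colorable.mp (le_of_eq hm.symm)
    exact hcolm.mono (by omega)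
  exact hN V G hP5 hK14 hcol hncol hdel
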